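/- Let n ≥ 1, fix integers 1 ≤ m₁ ≤ m₂ ≤ n and real constants a₁,…,a_{m₁}, b₁,…,b_{m₂}. Set M(x) = Σ_{i=1}^{m₁} aᵢxᵢ, P(x) = Σ_{j=1}^{m₂} bⱼxⱼ, ξ(x) = M(x)/P(x) on {x ∈ ℝⁿ : P(x) ≠ 0}, η = Σ_{j=1}^{m₂} bⱼ², θ = −2Σ_{i=1}^{m₁} aᵢbᵢ, δ = Σ_{i=1}^{m₁} aᵢ², and Q(t) = ηt² + θt + δ. Then for every x with P(x) ≠ 0, Q(ξ(x)) · Σ_{k=1}^{n} ∂ₖ∂ₖξ(x) = (Σ_{k=1}^{n} (∂ₖξ(x))²) · Q'(ξ(x)), where Q'(t) = 2ηt + θ. -/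

import Mathlib

/-- The partial derivative of `f : ℝⁿ → ℝ` in the `i`-th coordinate direction. -/
noncomputable def pd {n : ℕ} (i : Fin n) (f : (Fin n → ℝ) → ℝ) : (Fin n → ℝ) → ℝ :=
  fun x => fderiv ℝ f x (Pi.single i 1)

lemma myDiv {E : Type*} [NormedAddCommGroup E] [NormedSpace ℝ E]
    {f g : E → ℝ} {f' g' : E →L[ℝ] ℝ} {x : E}
    (hf : HasFDerivAt f f' x) (hg : HasFDerivAt g g' x) (h : g x ≠ 0) :
    HasFDerivAt (fun y => f y / g y)
      ((g x)⁻¹ • f' - (f x / (g x) ^ 2) • g') x := by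
  have hinv : HasFDerivAt (fun y => (g y)⁻¹)
      (((1 : ℝ →L[ℝ] ℝ).smulRight (-((g x) ^ 2)⁻¹)).comp g') x :=
    (hasFDerivAt_inv h).comp x hg
  have h2 := hf.fun_mul hinv
  have h3 : HasFDerivAt (fun y => f y / g y)
      (f x • (((1 : ℝ →L[ℝ] ℝ).smulRight (-((g x) ^ 2)⁻¹)).comp g') + (g x)⁻¹ • f') x := by
    simpa only [div_eq_mul_inv] using h2
  convert h3 using 1
  ext v
  simp [ContinuousLinearMap.smul_apply, ContinuousLinearMap.comp_apply,
    ContinuousLinearMap.smulRight_apply, smul_eq_mul]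
  field_simp
  ring

noncomputable def linCLM {n : ℕ} (A : Fin n → ℝ) : (Fin n → ℝ) →L[ℝ] ℝ :=
  ∑ i, A i • (ContinuousLinearMap.proj i : (Fin n → ℝ) →L[ℝ] ℝ)

lemma lin_hasFDerivAt {n : ℕ} (A : Fin n → ℝ) (y : Fin n → ℝ) :
    HasFDerivAt (fun x : Fin n → ℝ => ∑ i, A i * x i) (linCLM A) y := by
  have := HasFDerivAt.fun_sum (u := Finset.univ)
    (fun i (_ : i ∈ Finset.univ) =>
      ((ContinuousLinearMap.proj (R := ℝ) (φ := fun _ : Fin n => ℝ) i).hasFDerivAt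
        (x := y)).const_mul (A i))
  simpa [linCLM, ContinuousLinearMap.proj_apply, smul_eq_mul] using this

lemma linCLM_single {n : ℕ} (A : Fin n → ℝ) (k : Fin n) :
    linCLM A (Pi.single k 1) = A k := by
  simp [linCLM, ContinuousLinearMap.sum_apply, Pi.single_apply]

lemma pd_ratio {n : ℕ} (A B : Fin n → ℝ) (k : Fin n) (x : Fin n → ℝ)
    (hp : (∑ j, B j * x j) ≠ 0) :
    pd k (fun y => (∑ i, A i * y i) / (∑ j, B j * y j)) x
      = (A k * (∑ j, B j * x j) - B k * (∑ i, A i * x i)) / (∑ j, B j * x j) ^ 2 := by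
  have h := myDiv (lin_hasFDerivAt A x) (lin_hasFDerivAt B x) hp
  rw [pd, h.fderiv]
  simp [ContinuousLinearMap.sub_apply, ContinuousLinearMap.smul_apply, linCLM_single,
    smul_eq_mul]
  field_simp

lemma pd_pd_ratio {n : ℕ} (A B : Fin n → ℝ) (k : Fin n) (x : Fin n → ℝ)
    (hp : (∑ j, B j * x j) ≠ 0) :
    pd k (pd k (fun y => (∑ i, A i * y i) / (∑ j, B j * y j))) x
      = -(2 * B k * (A k * (∑ j, B j * x j) - B k * (∑ i, A i * x i)))
          / (∑ j, B j * x j) ^ 3 := by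
  have hcont : Continuous (fun y : Fin n → ℝ => ∑ j, B j * y j) := by
    rw [continuous_iff_continuousAt]
    exact fun y => (lin_hasFDerivAt B y).continuousAt
  have hU : IsOpen {y : Fin n → ℝ | (∑ j, B j * y j) ≠ 0} :=
    isOpen_compl_singleton.preimage hcont
  -- numerator of pd k ξ
  set g : (Fin n → ℝ) → ℝ := fun y =>
    (A k * (∑ j, B j * y j) - B k * (∑ i, A i * y i)) / ((∑ j, B j * y j) * (∑ j, B j * y j))
    with hg
  have hev : pd k (fun y => (∑ i, A i * y i) / (∑ j, B j * y j)) =ᶠ[nhds x] g := by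
    filter_upwards [hU.mem_nhds hp] with y hy
    rw [pd_ratio A B k y hy, hg]
    simp only
    rw [sq]
  have hNd : HasFDerivAt (fun y : Fin n → ℝ =>
      A k * (∑ j, B j * y j) - B k * (∑ i, A i * y i))
      (A k • linCLM B - B k • linCLM A) x :=
    ((lin_hasFDerivAt B x).const_mul (A k)).sub ((lin_hasFDerivAt A x).const_mul (B k))
  have hDd : HasFDerivAt (fun y : Fin n → ℝ => (∑ j, B j * y j) * (∑ j, B j * y j))
      ((∑ j, B j * x j) • linCLM B + (∑ j, B j * x j) • linCLM B) x :=
    (lin_hasFDerivAt B x).mul (lin_hasFDerivAt B x)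
  have hD0 : (∑ j, B j * x j) * (∑ j, B j * x j) ≠ 0 := mul_ne_zero hp hp
  have hgd := myDiv hNd hDd hD0
  rw [pd, hev.fderiv_eq, hgd.fderiv]
  simp only [ContinuousLinearMap.sub_apply, ContinuousLinearMap.add_apply,
    ContinuousLinearMap.smul_apply, linCLM_single, smul_eq_mul]
  field_simp
  ring

/-- the fundamental relation `Q(ξ)·Δξ = |∇ξ|²·Q'(ξ)` for the
dilation invariant `ξ = M/P`, where `Q(t) = ηt² + θt + δ`. -/
theorem dilation_invariant_fundamental_relation
    (n : ℕ) (hn : 1 ≤ n) (m₁ m₂ : ℕ) (hm₁ : 1 ≤ m₁) (hm₁₂ : m₁ ≤ m₂) (hm₂ : m₂ ≤ n)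
    (a b : Fin n → ℝ)
    (M P ξ : (Fin n → ℝ) → ℝ)
    (hM : M = fun x => ∑ i : Fin n, if (i : ℕ) < m₁ then a i * x i else 0)
    (hP : P = fun x => ∑ j : Fin n, if (j : ℕ) < m₂ then b j * x j else 0)
    (hξ : ξ = fun x => M x / P x)
    (η θ δ : ℝ)
    (hη : η = ∑ j : Fin n, if (j : ℕ) < m₂ then (b j) ^ 2 else 0)
    (hθ : θ = -2 * ∑ i : Fin n, if (i : ℕ) < m₁ then a i * b i else 0)
    (hδ : δ = ∑ i : Fin n, if (i : ℕ) < m₁ then (a i) ^ 2 else 0)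
    (Q Q' : ℝ → ℝ)
    (hQ : Q = fun t => η * t ^ 2 + θ * t + δ)
    (hQ' : Q' = fun t => 2 * η * t + θ) :
    ∀ x : Fin n → ℝ, P x ≠ 0 →
      Q (ξ x) * ∑ k : Fin n, pd k (pd k ξ) x
        = (∑ k : Fin n, (pd k ξ x) ^ 2) * Q' (ξ x) := by
  intro x hPx
  classical
  set A : Fin n → ℝ := fun i => if (i : ℕ) < m₁ then a i else 0 with hA
  set B : Fin n → ℝ := fun j => if (j : ℕ) < m₂ then b j else 0 with hB
  have hMe : M = fun y => ∑ i, A i * y i := by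
    rw [hM]; funext y
    exact Finset.sum_congr rfl fun i _ => by
      by_cases h : (i : ℕ) < m₁ <;> simp [hA, h]
  have hPe : P = fun y => ∑ j, B j * y j := by
    rw [hP]; funext y
    exact Finset.sum_congr rfl fun j _ => by
      by_cases h : (j : ℕ) < m₂ <;> simp [hB, h]
  have hξe : ξ = fun y => (∑ i, A i * y i) / (∑ j, B j * y j) := by
    rw [hξ, hMe, hPe]
  have hpx : (∑ j, B j * x j) ≠ 0 := by rw [hPe] at hPx; exact hPx
  set p : ℝ := ∑ j, B j * x j with hpdef
  set u : ℝ := ∑ i, A i * x i with hudef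
  set s1 : ℝ := ∑ k, A k * B k with hs1
  set s2 : ℝ := ∑ k, B k ^ 2 with hs2
  set s3 : ℝ := ∑ k, A k ^ 2 with hs3
  have hθ' : θ = -2 * s1 := by
    rw [hθ, hs1]
    congr 1
    exact Finset.sum_congr rfl fun i _ => by
      by_cases h : (i : ℕ) < m₁
      · have h2 : (i : ℕ) < m₂ := lt_of_lt_of_le h hm₁₂
        simp [hA, hB, h, h2]
      · simp [hA, h]
  have hη' : η = s2 := by
    rw [hη, hs2]
    exact Finset.sum_congr rfl fun j _ => by
      by_cases h : (j : ℕ) < m₂ <;> simp [hB, h]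
  have hδ' : δ = s3 := by
    rw [hδ, hs3]
    exact Finset.sum_congr rfl fun i _ => by
      by_cases h : (i : ℕ) < m₁ <;> simp [hA, h]
  have hξx : ξ x = u / p := by rw [hξe]
  have hsum1 : ∑ k, pd k (pd k ξ) x = (-2 * p * s1 + 2 * u * s2) / p ^ 3 := by
    rw [hξe]
    have : ∀ k : Fin n,
        pd k (pd k fun y => (∑ i, A i * y i) / (∑ j, B j * y j)) x
          = (-2 * p * (A k * B k) + 2 * u * B k ^ 2) / p ^ 3 := by
      intro k
      rw [pd_pd_ratio A B k x hpx, ← hpdef, ← hudef]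
      ring
    rw [Finset.sum_congr rfl fun k _ => this k, ← Finset.sum_div]
    congr 1
    rw [Finset.sum_add_distrib, ← Finset.mul_sum, ← Finset.mul_sum, ← hs1, ← hs2]
  have hsum2 : ∑ k, (pd k ξ x) ^ 2
      = (p ^ 2 * s3 - 2 * p * u * s1 + u ^ 2 * s2) / p ^ 4 := by
    rw [hξe]
    have : ∀ k : Fin n,
        (pd k (fun y => (∑ i, A i * y i) / (∑ j, B j * y j)) x) ^ 2
          = (p ^ 2 * A k ^ 2 - 2 * p * u * (A k * B k) + u ^ 2 * B k ^ 2) / p ^ 4 := by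
      intro k
      rw [pd_ratio A B k x hpx, ← hpdef, ← hudef, div_pow]
      have : ((p : ℝ) ^ 2) ^ 2 = p ^ 4 := by ring
      rw [this]
      congr 1
      ring
    rw [Finset.sum_congr rfl fun k _ => this k, ← Finset.sum_div]
    congr 1
    rw [Finset.sum_add_distrib, Finset.sum_sub_distrib, ← Finset.mul_sum, ← Finset.mul_sum,
      ← Finset.mul_sum, ← hs1, ← hs2, ← hs3]
  rw [hsum1, hsum2, hξx, hQ, hQ', hθ', hη', hδ']
  simp only
  field_simp
  ring
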